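/- arXiv:2511.21894 — 2 statements merged into one kernel-verified Lean document; each statement's English description precedes it below -/
import Mathlib

section
/- For every positive integer m, the semigroup B_ω^{F^n} is isomorphic to its subsemigroup (m,m,0)·B_ω^{F^n}·(m,m,0) = {(i,j,p) : i,j ≥ m}, via the corestriction of λ^m. -/
/-- The bicyclic-extension semigroup operation on `ℕ × ℕ × Fin n`. -/
def Bmul (n : ℕ) (x y : ℕ × ℕ × Fin n) : ℕ × ℕ × Fin n :=
  if x.2.1 ≤ y.1 then
    (x.1 - x.2.1 + y.1, y.2.1,
      ⟨max (x.2.2.1 - (y.1 - x.2.1)) y.2.2.1, by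
        have h1 := x.2.2.2; have h2 := y.2.2.2; omega⟩)
  else
    (x.1, x.2.1 - y.1 + y.2.1,
      ⟨max x.2.2.1 (y.2.2.1 - (x.2.1 - y.1)), by
        have h1 := x.2.2.2; have h2 := y.2.2.2; omega⟩)

/-- The shift endomorphism λ. -/
def lamB (n : ℕ) (x : ℕ × ℕ × Fin n) : ℕ × ℕ × Fin n :=
  (x.1 + 1, x.2.1 + 1, x.2.2)

/-- The endomorphism ϖ_n. -/
def varpiB (n : ℕ) (x : ℕ × ℕ × Fin n) : ℕ × ℕ × Fin n :=
  (x.1 + x.2.2.1, x.2.1 + x.2.2.1,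
    ⟨n - 1 - x.2.2.1, by have := x.2.2.2; omega⟩)

/-- The endomorphism α_[k] of B_ω^{F³}. -/
def alphaB (k : ℕ) (x : ℕ × ℕ × Fin 3) : ℕ × ℕ × Fin 3 :=
  if x.2.2.1 = 2 then (k * (x.1 + 1) - 1, k * (x.2.1 + 1) - 1, x.2.2)
  else (k * x.1, k * x.2.1, x.2.2)

lemma lamB_iter (n m : ℕ) (x : ℕ × ℕ × Fin n) :
    (lamB n)^[m] x = (x.1 + m, x.2.1 + m, x.2.2) := by
  induction m with
  | zero => simp
  | succ k ih =>
    rw [Function.iterate_succ_apply', ih, lamB]; simp [Nat.add_assoc]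

/-- `B_ω^{F^n}` is isomorphic to its subsemigroup `(m,m,0)·B_ω^{F^n}·(m,m,0)
= {(i,j,p) : i,j ≥ m}` via the corestriction of `λ^m`. -/
theorem B_iso_sandwich (n m : ℕ) (hn : 0 < n) (hm : 0 < m) :
    (∀ z : ℕ × ℕ × Fin n,
      (∃ x, z = Bmul n (Bmul n (m, m, ⟨0, hn⟩) x) (m, m, ⟨0, hn⟩)) ↔
        m ≤ z.1 ∧ m ≤ z.2.1) ∧
    Function.Injective ((lamB n)^[m]) ∧
    Set.range ((lamB n)^[m]) = {z : ℕ × ℕ × Fin n | m ≤ z.1 ∧ m ≤ z.2.1} ∧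
    ∀ x y : ℕ × ℕ × Fin n,
      (lamB n)^[m] (Bmul n x y) = Bmul n ((lamB n)^[m] x) ((lamB n)^[m] y) := by
  refine ⟨?_, ?_, ?_, ?_⟩
  · intro z
    constructor
    · rintro ⟨x, rfl⟩
      simp only [Bmul]
      split_ifs <;> simp <;> omega
    · rintro ⟨h1, h2⟩
      refine ⟨z, ?_⟩
      obtain ⟨i, j, p⟩ := z
      simp only [Bmul]
      split_ifs <;>
        refine Prod.ext ?_ (Prod.ext ?_ (Fin.ext ?_)) <;> simp at * <;> omega
  · intro a b h
    rw [lamB_iter, lamB_iter] at h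
    obtain ⟨i, j, p⟩ := a
    obtain ⟨i', j', p'⟩ := b
    simp only [Prod.mk.injEq] at h ⊢
    exact ⟨by omega, by omega, h.2.2⟩
  · ext z
    simp only [Set.mem_range, Set.mem_setOf_eq, lamB_iter]
    constructor
    · rintro ⟨x, rfl⟩; simp
    · rintro ⟨h1, h2⟩
      exact ⟨(z.1 - m, z.2.1 - m, z.2.2), by
        refine Prod.ext ?_ (Prod.ext ?_ rfl) <;> simp <;> omega⟩
  · intro x y
    simp only [lamB_iter, Bmul]
    split_ifs <;>
      refine Prod.ext ?_ (Prod.ext ?_ (Fin.ext ?_)) <;> simp <;> omega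
end

section
/- For every positive integer k, ϖ₃ ∘ α_[k] = α_[k] ∘ ϖ₃ ∘ λ^{k-1} as maps on B_ω^{F³}, i.e., for all (i,j,p), ((i,j,p)ϖ₃)α_[k] = (((i,j,p)α_[k])ϖ₃)λ^{k-1}. -/
lemma lam_iter (m : ℕ) (x : ℕ × ℕ × Fin 3) :
    (lamB 3)^[m] x = (x.1 + m, x.2.1 + m, x.2.2) := by
  induction m with
  | zero => simp
  | succ n ih =>
      rw [Function.iterate_succ_apply', ih, lamB]
      simp [add_assoc]

/-- `ϖ₃ ∘ α_[k] = α_[k] ∘ ϖ₃ ∘ λ^{k-1}` (composition left to right). -/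
theorem varpi_alpha (k : ℕ) (hk : 0 < k) (x : ℕ × ℕ × Fin 3) :
    alphaB k (varpiB 3 x) = (lamB 3)^[k - 1] (varpiB 3 (alphaB k x)) := by
  obtain ⟨i, j, p, hp⟩ := x
  interval_cases p <;>
    simp [varpiB, alphaB, lam_iter, Fin.ext_iff, Nat.mul_succ, Nat.mul_add] <;> omega
end
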